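/- Let φ : G → H be a rough isometry between finitely generated groups (with word metrics). Then the pullback φ*f = f ∘ φ maps BD_p(H) into BD_p(G); moreover there is a constant C (depending only on the rough-isometry constants and the generating sets) such that ∑_{g∈G}∑_{s∈S}|φ*f(gs⁻¹) − φ*f(g)|^p ≤ C ∑_{h∈H}∑_{t∈T}|f(ht⁻¹) − f(h)|^p for all f ∈ BD_p(H). -/

import Mathlib

open Filter Topology

namespace PHB

variable {G : Type*} [Group G]

/-- One Dirichlet term `‖f(gs⁻¹) − f(g)‖^p`. -/
noncomputable def dpTerm (p : ℝ) (f : G → ℂ) (s g : G) : ℝ := ‖f (g * s⁻¹) - f g‖ ^ p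

/-- Membership in `D_p(G)`. -/
def MemDp (p : ℝ) (S : Finset G) (f : G → ℂ) : Prop :=
  ∀ s ∈ S, Summable (dpTerm p f s)

/-- The Dirichlet `p`-sum `∑_{s∈S}∑_{g∈G} ‖f(gs⁻¹) − f(g)‖^p`. -/
noncomputable def dirSum (p : ℝ) (S : Finset G) (f : G → ℂ) : ℝ :=
  ∑ s ∈ S, ∑' g, dpTerm p f s g

/-- The `D_p`-norm `(∑_{s,g}|f(gs⁻¹)−f(g)|^p + |f(e)|^p)^{1/p}`. -/
noncomputable def dpNorm (p : ℝ) (S : Finset G) (f : G → ℂ) : ℝ :=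
  (dirSum p S f + ‖f 1‖ ^ p) ^ (1/p)

/-- The norm on `D_p(G)/ℂ`: `(∑_{s,g}|f(gs⁻¹)−f(g)|^p)^{1/p}`. -/
noncomputable def qNorm (p : ℝ) (S : Finset G) (f : G → ℂ) : ℝ :=
  dirSum p S f ^ (1/p)

/-- Boundedness of a function. -/
def BddFun (f : G → ℂ) : Prop := ∃ M : ℝ, ∀ g, ‖f g‖ ≤ M

/-- The sup norm. -/
noncomputable def supNorm (f : G → ℂ) : ℝ := ⨆ g, ‖f g‖

/-- The `BD_p`-norm `‖f‖_∞ + (∑_{s,g}|f(gs⁻¹)−f(g)|^p)^{1/p}`. -/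
noncomputable def bdpNorm (p : ℝ) (S : Finset G) (f : G → ℂ) : ℝ :=
  supNorm f + dirSum p S f ^ (1/p)

/-- Membership in `BD_p(G)`: bounded and finite Dirichlet `p`-sum. -/
def MemBDp (p : ℝ) (S : Finset G) (f : G → ℂ) : Prop := BddFun f ∧ MemDp p S f

/-- Membership in `ℓ^p(G)`. -/
def MemLp' (p : ℝ) (f : G → ℂ) : Prop := Summable fun g => ‖f g‖ ^ p

/-- `f` lies in the `D_p`-closure of the finitely supported functions `ℂG`. -/
def InClosCG (p : ℝ) (S : Finset G) (f : G → ℂ) : Prop :=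
  MemDp p S f ∧ ∀ ε : ℝ, 0 < ε →
    ∃ h : G → ℂ, (Function.support h).Finite ∧ dpNorm p S (f - h) < ε

/-- `f` is a bounded function in the `D_p`-closure of `ℂG`. -/
def InBClosCG (p : ℝ) (S : Finset G) (f : G → ℂ) : Prop := BddFun f ∧ InClosCG p S f

/-- `f` lies in the `D_p`-closure of `ℓ^p(G)`. -/
def InClosLp (p : ℝ) (S : Finset G) (f : G → ℂ) : Prop :=
  MemDp p S f ∧ ∀ ε : ℝ, 0 < ε →
    ∃ h : G → ℂ, MemLp' p h ∧ dpNorm p S (f - h) < ε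

/-- `f` is a bounded function in the `D_p`-closure of `ℓ^p(G)`. -/
def InBClosLp (p : ℝ) (S : Finset G) (f : G → ℂ) : Prop := BddFun f ∧ InClosLp p S f

/-- `f` lies in the `D_p`-closure of `ℓ^p(G) ⊕ ℂ`. -/
def InClosLpC (p : ℝ) (S : Finset G) (f : G → ℂ) : Prop :=
  MemDp p S f ∧ ∀ ε : ℝ, 0 < ε →
    ∃ (h : G → ℂ) (c : ℂ), MemLp' p h ∧ dpNorm p S (f - h - Function.const G c) < ε

/-- A character (nonzero multiplicative linear functional) on `BD_p(G)`. -/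
structure BDpChar (p : ℝ) (S : Finset G) where
  toFun : {f : G → ℂ // MemBDp p S f} → ℂ
  map_add : ∀ (f h : {f : G → ℂ // MemBDp p S f}) (hm : MemBDp p S (f.1 + h.1)),
    toFun ⟨f.1 + h.1, hm⟩ = toFun f + toFun h
  map_mul : ∀ (f h : {f : G → ℂ // MemBDp p S f}) (hm : MemBDp p S (f.1 * h.1)),
    toFun ⟨f.1 * h.1, hm⟩ = toFun f * toFun h
  map_smul : ∀ (c : ℂ) (f : {f : G → ℂ // MemBDp p S f}) (hm : MemBDp p S (c • f.1)),
    toFun ⟨c • f.1, hm⟩ = c * toFun f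
  map_one : ∀ hm : MemBDp p S (1 : G → ℂ), toFun ⟨1, hm⟩ = 1

/-- The weak-* topology on the spectrum `Sp(BD_p(G))`. -/
noncomputable instance (p : ℝ) (S : Finset G) : TopologicalSpace (BDpChar p S) :=
  TopologicalSpace.induced BDpChar.toFun Pi.topologicalSpace

/-- The evaluation embedding `i : G → Sp(BD_p(G))`, `(i g)(f) = f(g)`. -/
def evalChar (p : ℝ) (S : Finset G) (g : G) : BDpChar p S where
  toFun := fun f => f.1 g
  map_add := fun _ _ _ => rfl
  map_mul := fun _ _ _ => rfl
  map_smul := fun _ _ _ => rfl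
  map_one := fun _ => rfl

/-- The `p`-Laplacian `Δ_p f(g) = ∑_{s∈S} |f(gs⁻¹)−f(g)|^{p−2}(f(gs⁻¹)−f(g))`. -/
noncomputable def pLap (p : ℝ) (S : Finset G) (f : G → ℂ) (g : G) : ℂ :=
  ∑ s ∈ S, ((‖f (g * s⁻¹) - f g‖ ^ (p - 2) : ℝ) : ℂ) * (f (g * s⁻¹) - f g)

/-- `f` is `p`-harmonic: `f ∈ D_p(G)` and `Δ_p f ≡ 0`. -/
def PHarmonic (p : ℝ) (S : Finset G) (f : G → ℂ) : Prop :=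
  MemDp p S f ∧ ∀ g, pLap p S f g = 0

/-- The `p`-harmonic boundary `∂_p(G) ⊆ Sp(BD_p(G)) \ G`. -/
def pBoundary (p : ℝ) (S : Finset G) : Set (BDpChar p S) :=
  {x | (∀ g : G, x ≠ evalChar p S g) ∧
    ∀ (f : G → ℂ) (hf : MemBDp p S f), InBClosCG p S f → x.toFun ⟨f, hf⟩ = 0}

/-- The word metric on `G` with respect to the generating set `S`. -/
noncomputable def wordDist (S : Finset G) (x y : G) : ℕ :=
  sInf {n | ∃ l : List G, (∀ a ∈ l, a ∈ S) ∧ l.length = n ∧ x⁻¹ * y = l.prod}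

/-- The word length `|g| = d(e,g)`. -/
noncomputable def wordLen (S : Finset G) (g : G) : ℕ := wordDist S 1 g

/-- Right translation `f_x(g) = f(gx⁻¹)`. -/
def translateFun (f : G → ℂ) (x : G) : G → ℂ := fun g => f (g * x⁻¹)

/-- `φ : G → H` is a rough isometry with constants `a, b, c` for the word metrics. -/
def RoughIsom {G H : Type*} [Group G] [Group H] (S : Finset G) (T : Finset H)
    (φ : G → H) (a b c : ℝ) : Prop :=
  1 ≤ a ∧ 0 ≤ b ∧ 0 < c ∧
  (∀ x y : G, (1/a) * (wordDist S x y : ℝ) - b ≤ (wordDist T (φ x) (φ y) : ℝ) ∧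
    (wordDist T (φ x) (φ y) : ℝ) ≤ a * (wordDist S x y : ℝ) + b) ∧
  ∀ h : H, ∃ x : G, (wordDist T (φ x) h : ℝ) < c

/-- `S` is a symmetric generating set of `G`. -/
def SymmGen (S : Finset G) : Prop :=
  (∀ s ∈ S, s⁻¹ ∈ S) ∧ Subgroup.closure (S : Set G) = ⊤

end PHB

section PullbackAux

open PHB

variable {G : Type*} [Group G]

private lemma wd_le (S : Finset G) {x y : G} (l : List G) (hl : ∀ a ∈ l, a ∈ S)
    (hprod : x⁻¹ * y = l.prod) : PHB.wordDist S x y ≤ l.length :=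
  Nat.sInf_le ⟨l, hl, rfl, hprod⟩

private lemma exists_word {S : Finset G} (hS : PHB.SymmGen S) (x y : G) :
    ∃ l : List G, (∀ a ∈ l, a ∈ S) ∧ l.length = PHB.wordDist S x y ∧ x⁻¹ * y = l.prod := by
  have hx : x⁻¹ * y ∈ Subgroup.closure (S : Set G) := by
    rw [hS.2]; exact Subgroup.mem_top _
  have hx' : x⁻¹ * y ∈ Submonoid.closure ((S : Set G) ∪ (S : Set G)⁻¹) := by
    rw [← Subgroup.closure_toSubmonoid] at *; exact hx
  obtain ⟨l, hl, hpr⟩ := Submonoid.exists_list_of_mem_closure hx'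
  have hl' : ∀ a ∈ l, a ∈ S := by
    intro a ha
    rcases hl a ha with h | h
    · exact h
    · have := hS.1 a⁻¹ (by simpa using h)
      simpa using this
  have hne : {n | ∃ l : List G, (∀ a ∈ l, a ∈ S) ∧ l.length = n ∧ x⁻¹ * y = l.prod}.Nonempty :=
    ⟨l.length, l, hl', rfl, hpr.symm⟩
  obtain ⟨l', h1, h2, h3⟩ := Nat.sInf_mem hne
  exact ⟨l', h1, h2, h3⟩

private lemma wd_one (S : Finset G) (g g' : G) :
    PHB.wordDist S 1 (g⁻¹ * g') = PHB.wordDist S g g' := by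
  unfold PHB.wordDist
  simp only [inv_one, one_mul]

private lemma ball_finite {S : Finset G} (hS : PHB.SymmGen S) (r : ℕ) :
    {x : G | PHB.wordDist S 1 x ≤ r}.Finite := by
  induction r with
  | zero =>
    apply Set.Finite.subset (Set.finite_singleton (1 : G))
    intro x hx
    simp only [Set.mem_setOf_eq, Nat.le_zero] at hx
    obtain ⟨l, hlm, hlen, hpr⟩ := exists_word hS 1 x
    rw [inv_one, one_mul] at hpr
    rw [hx] at hlen
    rw [List.length_eq_zero_iff.mp hlen] at hpr
    simp only [List.prod_nil] at hpr
    simp [hpr]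
  | succ r ih =>
    have hsub : {x : G | PHB.wordDist S 1 x ≤ r + 1} ⊆
        {x : G | PHB.wordDist S 1 x ≤ r} ∪
          ⋃ s ∈ (S : Set G), (fun y => y * s) '' {x : G | PHB.wordDist S 1 x ≤ r} := by
      intro x hx
      simp only [Set.mem_setOf_eq] at hx
      obtain ⟨l, hlm, hlen, hpr⟩ := exists_word hS 1 x
      rw [inv_one, one_mul] at hpr
      by_cases hl : l.length ≤ r
      · left
        exact le_trans (wd_le S l hlm (by rw [inv_one, one_mul, hpr])) hl
      · right
        have hne : l ≠ [] := by
          intro h; rw [h] at hl; simp at hl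
        refine Set.mem_biUnion (hlm _ (List.getLast_mem hne)) ⟨l.dropLast.prod, ?_, ?_⟩
        · show PHB.wordDist S 1 l.dropLast.prod ≤ r
          refine le_trans (wd_le S l.dropLast
            (fun a ha => hlm a (List.dropLast_subset l ha)) (by rw [inv_one, one_mul])) ?_
          rw [List.length_dropLast]
          omega
        · show l.dropLast.prod * l.getLast hne = x
          rw [hpr]
          conv_rhs => rw [← List.dropLast_append_getLast hne]
          rw [List.prod_append, List.prod_cons, List.prod_nil, mul_one]
    exact Set.Finite.subset (ih.union (Set.Finite.biUnion S.finite_toSet fun s _ => ih.image _))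
      hsub

private lemma telescope_bound {p : ℝ} (hp : 1 ≤ p) (f : G → ℂ) (x : G) (l : List G) :
    ‖f (x * l.prod) - f x‖ ^ p ≤ (l.length : ℝ) ^ p *
      ∑ i ∈ Finset.range l.length,
        ‖f (x * (l.take (i + 1)).prod) - f (x * (l.take i).prod)‖ ^ p := by
  have hp0 : 0 < p := lt_of_lt_of_le one_pos hp
  set n := l.length with hn
  set u : ℕ → ℂ := fun i => f (x * (l.take i).prod) with hu
  set M : ℝ := ∑ i ∈ Finset.range n, ‖u (i + 1) - u i‖ ^ p with hM
  have hM0 : 0 ≤ M := Finset.sum_nonneg fun i _ => Real.rpow_nonneg (norm_nonneg _) p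
  have key : f (x * l.prod) - f x = ∑ i ∈ Finset.range n, (u (i + 1) - u i) := by
    rw [Finset.sum_range_sub u n]
    simp only [hu, hn, List.take_length, List.take_zero, List.prod_nil, mul_one]
  have h1 : ‖f (x * l.prod) - f x‖ ≤ (n : ℝ) * M ^ (1 / p) := by
    rw [key]
    refine (norm_sum_le _ _).trans ?_
    have hb : ∀ i ∈ Finset.range n, ‖u (i + 1) - u i‖ ≤ M ^ (1 / p) := by
      intro i hi
      have h2 : ‖u (i + 1) - u i‖ ^ p ≤ M :=
        Finset.single_le_sum (f := fun j => ‖u (j + 1) - u j‖ ^ p)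
          (fun j _ => Real.rpow_nonneg (norm_nonneg _) p) hi
      have h3 : ‖u (i + 1) - u i‖ = (‖u (i + 1) - u i‖ ^ p) ^ (1 / p) := by
        rw [← Real.rpow_mul (norm_nonneg _), mul_one_div_cancel hp0.ne', Real.rpow_one]
      rw [h3]
      exact Real.rpow_le_rpow (Real.rpow_nonneg (norm_nonneg _) p) h2 (by positivity)
    calc ∑ i ∈ Finset.range n, ‖u (i + 1) - u i‖
        ≤ ∑ _i ∈ Finset.range n, M ^ (1 / p) := Finset.sum_le_sum hb
      _ = (n : ℝ) * M ^ (1 / p) := by rw [Finset.sum_const, Finset.card_range, nsmul_eq_mul]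
  calc ‖f (x * l.prod) - f x‖ ^ p
      ≤ ((n : ℝ) * M ^ (1 / p)) ^ p := Real.rpow_le_rpow (norm_nonneg _) h1 hp0.le
    _ = (n : ℝ) ^ p * M := by
        rw [Real.mul_rpow (Nat.cast_nonneg n) (Real.rpow_nonneg hM0 _),
          ← Real.rpow_mul hM0, one_div_mul_cancel hp0.ne', Real.rpow_one]

end PullbackAux

/-- the pullback along a rough isometry `φ : G → H` maps
`BD_p(H)` into `BD_p(G)`, with Dirichlet sums controlled by a constant `C`
depending only on the rough-isometry constants and the generating sets. -/
theorem pullback_BDp {G H : Type*} [Group G] [Infinite G] [Group H] [Infinite H]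
    (S : Finset G) (T : Finset H) (hS : PHB.SymmGen S) (hT : PHB.SymmGen T)
    (p : ℝ) (hp : 1 ≤ p) (φ : G → H) (a b c : ℝ) (hφ : PHB.RoughIsom S T φ a b c) :
    ∃ C : ℝ, 0 < C ∧ ∀ f : H → ℂ, PHB.MemBDp p T f →
      PHB.MemBDp p S (f ∘ φ) ∧
      PHB.dirSum p S (f ∘ φ) ≤ C * PHB.dirSum p T f := by
  classical
  obtain ⟨ha, hb, hc, hbounds, -⟩ := hφ
  have ha0 : 0 < a := lt_of_lt_of_le one_pos ha
  have hp0 : 0 < p := lt_of_lt_of_le one_pos hp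
  obtain ⟨R, hRa⟩ : ∃ R : ℕ, a + b ≤ (R : ℝ) := ⟨⌈a + b⌉₊, Nat.le_ceil _⟩
  obtain ⟨r, hrr⟩ : ∃ r : ℕ, a * (2 * (R : ℝ) + b) ≤ (r : ℝ) :=
    ⟨⌈a * (2 * (R : ℝ) + b)⌉₊, Nat.le_ceil _⟩
  obtain ⟨ballF, hballF⟩ : ∃ F : Finset G, ∀ x, x ∈ F ↔ PHB.wordDist S 1 x ≤ r :=
    ⟨(ball_finite hS r).toFinset, fun x => by simp [Set.Finite.mem_toFinset]⟩
  obtain ⟨K, hKdef⟩ : ∃ K : ℕ, K = ballF.card := ⟨ballF.card, rfl⟩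
  set C : ℝ := (S.card : ℝ) * ((R : ℝ) ^ p * ((R : ℝ) * (K : ℝ))) + 1 with hC
  have hCpos : 0 < C := by
    have h1 : 0 ≤ (S.card : ℝ) * ((R : ℝ) ^ p * ((R : ℝ) * (K : ℝ))) := by positivity
    rw [hC]; linarith
  refine ⟨C, hCpos, ?_⟩
  intro f hf
  obtain ⟨hfb, hfd⟩ := hf
  set W : H → ℝ := fun h => ∑ t ∈ T, PHB.dpTerm p f t h with hW
  have hWnn : ∀ h, 0 ≤ W h := fun h =>
    Finset.sum_nonneg fun t _ => Real.rpow_nonneg (norm_nonneg _) p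
  have hWsum : Summable W := summable_sum fun t ht => hfd t ht
  have hWtsum : ∑' h, W h = PHB.dirSum p T f := Summable.tsum_finsetSum fun t ht => hfd t ht
  have hDnn : 0 ≤ PHB.dirSum p T f :=
    Finset.sum_nonneg fun t _ => tsum_nonneg fun h => Real.rpow_nonneg (norm_nonneg _) p
  have hdist1 : ∀ g s : G, s ∈ S → PHB.wordDist T (φ g) (φ (g * s⁻¹)) ≤ R := by
    intro g s hs
    have h1 : PHB.wordDist S g (g * s⁻¹) ≤ 1 := by
      refine wd_le S [s⁻¹] ?_ ?_
      · simpa using hS.1 s hs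
      · simp
    have h1' : (PHB.wordDist S g (g * s⁻¹) : ℝ) ≤ 1 := by exact_mod_cast h1
    have h2 := (hbounds g (g * s⁻¹)).2
    have h3 : (PHB.wordDist T (φ g) (φ (g * s⁻¹)) : ℝ) ≤ (R : ℝ) := by
      refine h2.trans (le_trans ?_ hRa)
      nlinarith
    exact_mod_cast h3
  have key : ∀ s ∈ S, Summable (PHB.dpTerm p (f ∘ φ) s) ∧
      ∑' g, PHB.dpTerm p (f ∘ φ) s g ≤ (R : ℝ) ^ p * ((R : ℝ) * (K : ℝ)) * PHB.dirSum p T f := by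
    intro s hs
    have hch : ∀ g : G, ∃ l : List H, (∀ x ∈ l, x ∈ T) ∧
        l.length = PHB.wordDist T (φ g) (φ (g * s⁻¹)) ∧ (φ g)⁻¹ * φ (g * s⁻¹) = l.prod :=
      fun g => exists_word hT _ _
    choose L hLmem hLlen hLprod using hch
    set node : G → ℕ → H := fun g i => φ g * ((L g).take i).prod with hnode
    have hLlenR : ∀ g, (L g).length ≤ R := by
      intro g; rw [hLlen g]; exact hdist1 g s hs
    have hpt : ∀ g, PHB.dpTerm p (f ∘ φ) s g ≤
        (R : ℝ) ^ p * ∑ i ∈ Finset.range R, W (node g i) := by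
      intro g
      have heq : φ g * (L g).prod = φ (g * s⁻¹) := by rw [← hLprod g]; group
      have h1 : PHB.dpTerm p (f ∘ φ) s g ≤ ((L g).length : ℝ) ^ p *
          ∑ i ∈ Finset.range (L g).length, ‖f (node g (i + 1)) - f (node g i)‖ ^ p := by
        have ht := telescope_bound hp f (φ g) (L g)
        simp only [PHB.dpTerm, Function.comp_apply, hnode]
        rw [← heq]
        exact ht
      have h2 : ∀ i, ‖f (node g (i + 1)) - f (node g i)‖ ^ p ≤ W (node g i) := by
        intro i
        by_cases hi : i < (L g).length
        · have hstep : node g (i + 1) = node g i * (L g)[i] := by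
            simp only [hnode, List.prod_take_succ _ i hi, mul_assoc]
          have hmem : ((L g)[i])⁻¹ ∈ T := hT.1 _ (hLmem g _ (List.getElem_mem hi))
          have hterm : ‖f (node g (i + 1)) - f (node g i)‖ ^ p
              = PHB.dpTerm p f ((L g)[i])⁻¹ (node g i) := by
            rw [hstep]; unfold PHB.dpTerm; rw [inv_inv]
          rw [hterm]
          exact Finset.single_le_sum (f := fun t => PHB.dpTerm p f t (node g i))
            (fun t _ => Real.rpow_nonneg (norm_nonneg _) p) hmem
        · have hstep : node g (i + 1) = node g i := by
            simp only [hnode]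
            rw [List.take_of_length_le (by omega), List.take_of_length_le (by omega)]
          rw [hstep]
          simp only [sub_self, norm_zero]
          rw [Real.zero_rpow hp0.ne']
          exact hWnn _
      have hsubsum : ∑ i ∈ Finset.range (L g).length, ‖f (node g (i + 1)) - f (node g i)‖ ^ p
          ≤ ∑ i ∈ Finset.range R, W (node g i) := by
        refine le_trans (Finset.sum_le_sum fun i _ => h2 i) ?_
        exact Finset.sum_le_sum_of_subset_of_nonneg
          (Finset.range_subset_range.2 (hLlenR g)) (fun i _ _ => hWnn _)
      refine h1.trans ?_
      refine mul_le_mul ?_ hsubsum ?_ ?_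
      · exact Real.rpow_le_rpow (Nat.cast_nonneg _) (by exact_mod_cast hLlenR g) hp0.le
      · exact Finset.sum_nonneg fun i _ => Real.rpow_nonneg (norm_nonneg _) p
      · positivity
    have hfiber : ∀ (i : ℕ) (F : Finset G),
        ∑ g ∈ F, W (node g i) ≤ (K : ℝ) * PHB.dirSum p T f := by
      intro i F
      rw [Finset.sum_comp W (fun g => node g i)]
      have hcard : ∀ h ∈ F.image (fun g => node g i),
          ((F.filter fun g => node g i = h).card : ℝ) ≤ (K : ℝ) := by
        intro h hh
        obtain ⟨g₀, hg₀F, hg₀⟩ := Finset.mem_image.1 hh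
        have hcard' : (F.filter fun g => node g i = h).card ≤ K := by
          rw [hKdef]
          refine Finset.card_le_card_of_injOn (fun g' => g₀⁻¹ * g') ?_ ?_
          · intro g' hg'
            simp only [Finset.mem_coe, Finset.mem_filter] at hg'
            have hnn : node g' i = node g₀ i := hg'.2.trans hg₀.symm
            have hgoal : (φ g₀)⁻¹ * φ g' =
                (((L g₀).take i) ++ (((L g').take i).map (fun x => x⁻¹)).reverse).prod := by
              rw [List.prod_append, ← List.prod_inv_reverse]
              have h2 : φ g' * ((L g').take i).prod = φ g₀ * ((L g₀).take i).prod := by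
                simpa [hnode] using hnn
              have h3 : φ g' = φ g₀ * ((L g₀).take i).prod * (((L g').take i).prod)⁻¹ := by
                rw [← h2]; group
              rw [h3]; group
            have hd2R : PHB.wordDist T (φ g₀) (φ g') ≤ 2 * R := by
              refine le_trans (wd_le T _ ?_ hgoal) ?_
              · intro x hx
                rcases List.mem_append.1 hx with hx | hx
                · exact hLmem g₀ x (List.take_subset i (L g₀) hx)
                · rw [List.mem_reverse, List.mem_map] at hx
                  obtain ⟨y, hy, rfl⟩ := hx
                  exact hT.1 y (hLmem g' y (List.take_subset i (L g') hy))
              · rw [List.length_append, List.length_reverse, List.length_map]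
                have e1 : ((L g₀).take i).length ≤ (L g₀).length := by
                  rw [List.length_take]; omega
                have e2 : ((L g').take i).length ≤ (L g').length := by
                  rw [List.length_take]; omega
                have e3 := hLlenR g₀
                have e4 := hLlenR g'
                omega
            have hlow := (hbounds g₀ g').1
            have h2R : (PHB.wordDist T (φ g₀) (φ g') : ℝ) ≤ 2 * (R : ℝ) := by
              exact_mod_cast hd2R
            have h5 : (PHB.wordDist S g₀ g' : ℝ) ≤ a * (2 * (R : ℝ) + b) := by
              have h3 : (1 / a) * (PHB.wordDist S g₀ g' : ℝ) ≤ 2 * (R : ℝ) + b := by linarith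
              have h4 : (PHB.wordDist S g₀ g' : ℝ) = a * ((1 / a) * (PHB.wordDist S g₀ g' : ℝ)) := by
                field_simp
              rw [h4]
              exact mul_le_mul_of_nonneg_left h3 ha0.le
            have hdr : PHB.wordDist S g₀ g' ≤ r := by
              have h6 : (PHB.wordDist S g₀ g' : ℝ) ≤ (r : ℝ) := h5.trans hrr
              exact_mod_cast h6
            refine (hballF _).mpr ?_
            rw [wd_one]
            exact hdr
          · intro x _ y _ hxy
            exact mul_left_cancel hxy
        exact_mod_cast hcard'
      calc ∑ h ∈ F.image (fun g => node g i),
            (F.filter fun g => node g i = h).card • W h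
          ≤ ∑ h ∈ F.image (fun g => node g i), (K : ℝ) * W h := by
            refine Finset.sum_le_sum fun h hh => ?_
            rw [nsmul_eq_mul]
            exact mul_le_mul_of_nonneg_right (hcard h hh) (hWnn h)
        _ = (K : ℝ) * ∑ h ∈ F.image (fun g => node g i), W h := by rw [Finset.mul_sum]
        _ ≤ (K : ℝ) * PHB.dirSum p T f := by
            refine mul_le_mul_of_nonneg_left ?_ (Nat.cast_nonneg K)
            rw [← hWtsum]
            exact Summable.sum_le_tsum _ (fun h _ => hWnn h) hWsum
    have hFin : ∀ F : Finset G, ∑ g ∈ F, PHB.dpTerm p (f ∘ φ) s g ≤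
        (R : ℝ) ^ p * ((R : ℝ) * (K : ℝ)) * PHB.dirSum p T f := by
      intro F
      calc ∑ g ∈ F, PHB.dpTerm p (f ∘ φ) s g
          ≤ ∑ g ∈ F, (R : ℝ) ^ p * ∑ i ∈ Finset.range R, W (node g i) :=
            Finset.sum_le_sum fun g _ => hpt g
        _ = (R : ℝ) ^ p * ∑ i ∈ Finset.range R, ∑ g ∈ F, W (node g i) := by
            rw [← Finset.mul_sum, Finset.sum_comm]
        _ ≤ (R : ℝ) ^ p * ∑ _i ∈ Finset.range R, (K : ℝ) * PHB.dirSum p T f := by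
            refine mul_le_mul_of_nonneg_left ?_ (by positivity)
            exact Finset.sum_le_sum fun i _ => hfiber i F
        _ = (R : ℝ) ^ p * ((R : ℝ) * (K : ℝ)) * PHB.dirSum p T f := by
            rw [Finset.sum_const, Finset.card_range, nsmul_eq_mul]
            ring
    have hsummable : Summable (PHB.dpTerm p (f ∘ φ) s) := by
      refine summable_of_sum_le ?_ hFin
      intro g
      exact Real.rpow_nonneg (norm_nonneg _) p
    exact ⟨hsummable, Summable.tsum_le_of_sum_le hsummable hFin⟩
  constructor
  · constructor
    · obtain ⟨M, hM⟩ := hfb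
      exact ⟨M, fun g => hM (φ g)⟩
    · intro s hs
      exact (key s hs).1
  · unfold PHB.dirSum
    calc ∑ s ∈ S, ∑' g, PHB.dpTerm p (f ∘ φ) s g
        ≤ ∑ _s ∈ S, (R : ℝ) ^ p * ((R : ℝ) * (K : ℝ)) * PHB.dirSum p T f :=
          Finset.sum_le_sum fun s hs => (key s hs).2
      _ = (S.card : ℝ) * ((R : ℝ) ^ p * ((R : ℝ) * (K : ℝ))) * PHB.dirSum p T f := by
          rw [Finset.sum_const, nsmul_eq_mul]
          ring
      _ ≤ C * PHB.dirSum p T f := by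
          refine mul_le_mul_of_nonneg_right ?_ hDnn
          rw [hC]; linarith
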